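/- arXiv:2106.06098 — 2 statements merged into one kernel-verified Lean document; each statement's English description precedes it below -/
import Mathlib

section
/- Let $f_{1},\dots,f_{T}: \mathbb{R}^n \to \mathbb{R}$ be differentiable convex functions, $\mathcal{K} \subset \mathbb{R}^n$ a nonempty closed convex set of diameter at most $D$, and suppose $\|\nabla f_t(x)\| \le G$ for all $t$ and $x\in\mathcal{K}$. Let $x_1 \in \mathcal{K}$ and define the online gradient descent iterates $x_{t+1} = \Pi_{\mathcal{K}}(x_t - \eta_t \nabla f_t(x_t))$ with $\eta_t = \frac{D}{G\sqrt{t}}$, where $\Pi_{\mathcal{K}}$ is the Euclidean projection. Then $\sum_{t=1}^T f_t(x_t) - \min_{x^*\in\mathcal{K}} \sum_{t=1}^T f_t(x^*) \le \frac{3}{2} G D \sqrt{T}$. -/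
open Real in
lemma ogd_grad_ineq {E : Type*} [NormedAddCommGroup E] [InnerProductSpace ℝ E] [CompleteSpace E]
    (f : E → ℝ) (hconv : ConvexOn ℝ Set.univ f) (hdiff : Differentiable ℝ f) (x y : E) :
    inner ℝ (gradient f x) (y - x) ≤ f y - f x := by
  set φ : ℝ → ℝ := fun s => f (x + s • (y - x)) with hφ
  have hφd : ∀ s : ℝ, HasDerivAt φ (inner ℝ (gradient f (x + s • (y - x))) (y - x)) s := by
    intro s
    have h1 : HasDerivAt (fun s : ℝ => x + s • (y - x)) (y - x) s := by
      simpa using ((hasDerivAt_id s).smul_const (y - x)).const_add x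
    have h2 := ((hdiff (x + s • (y - x))).hasGradientAt.hasFDerivAt).comp_hasDerivAt s h1
    simpa [hφ, Function.comp_def] using h2
  have hφconv : ConvexOn ℝ Set.univ φ := by
    have := hconv.comp_affineMap (AffineMap.lineMap x y : ℝ →ᵃ[ℝ] E)
    have heq : (f ∘ (AffineMap.lineMap x y : ℝ →ᵃ[ℝ] E)) = φ := by
      funext s
      simp [hφ, AffineMap.lineMap_apply_module]
      ring_nf
      congr 1
      module
    rw [heq] at this
    simpa using this
  have hd := hφconv.deriv_le_slope (Set.mem_univ (0:ℝ)) (Set.mem_univ (1:ℝ)) zero_lt_one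
    (hφd 0).differentiableAt
  rw [(hφd 0).deriv] at hd
  have h0 : φ 0 = f x := by simp [hφ]
  have h1 : φ 1 = f y := by simp [hφ]
  have hs : slope φ 0 1 = f y - f x := by simp [slope_def_field, h0, h1]
  rw [hs] at hd
  simpa using hd

lemma ogd_sqrt_sum : ∀ T : ℕ, ∑ t ∈ Finset.Icc 1 T, 1 / Real.sqrt t ≤ 2 * Real.sqrt T := by
  intro T
  induction T with
  | zero => simp
  | succ T ih =>
    rw [Finset.sum_Icc_succ_top (Nat.one_le_iff_ne_zero.2 (Nat.succ_ne_zero T))]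
    have hs : Real.sqrt T ^ 2 = (T : ℝ) := Real.sq_sqrt (Nat.cast_nonneg T)
    have hu : Real.sqrt (T + 1 : ℕ) ^ 2 = ((T : ℝ) + 1) := by
      rw [Real.sq_sqrt (by positivity)]; push_cast; ring
    have hup : 0 < Real.sqrt (T + 1 : ℕ) := by
      apply Real.sqrt_pos.2; push_cast; positivity
    have hsn : 0 ≤ Real.sqrt T := Real.sqrt_nonneg _
    have key : 2 * Real.sqrt T + 1 / Real.sqrt (T + 1 : ℕ) ≤ 2 * Real.sqrt (T + 1 : ℕ) := by
      have h : (1:ℝ) ≤ (2 * Real.sqrt (T + 1 : ℕ) - 2 * Real.sqrt T) * Real.sqrt (T + 1 : ℕ) := by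
        nlinarith [sq_nonneg (Real.sqrt T - Real.sqrt (T + 1 : ℕ))]
      have := (div_le_iff₀ hup).2 h
      linarith
    calc ∑ t ∈ Finset.Icc 1 T, 1 / Real.sqrt t + 1 / Real.sqrt (T + 1 : ℕ)
        ≤ 2 * Real.sqrt T + 1 / Real.sqrt (T + 1 : ℕ) := by linarith
      _ ≤ 2 * Real.sqrt (T + 1 : ℕ) := key

set_option maxHeartbeats 1000000 in
theorem stmt_5 (n T : ℕ) (D G : ℝ) (hD : 0 < D) (hG : 0 < G)
    (f : ℕ → EuclideanSpace ℝ (Fin n) → ℝ)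
    (hconv : ∀ t, ConvexOn ℝ Set.univ (f t))
    (hdiff : ∀ t, Differentiable ℝ (f t))
    (K : Set (EuclideanSpace ℝ (Fin n))) (hKne : K.Nonempty)
    (hKclosed : IsClosed K) (hKconv : Convex ℝ K)
    (hdiam : ∀ a ∈ K, ∀ b ∈ K, ‖a - b‖ ≤ D)
    (hgrad : ∀ t, ∀ x ∈ K, ‖gradient (f t) x‖ ≤ G)
    (proj : EuclideanSpace ℝ (Fin n) → EuclideanSpace ℝ (Fin n))
    (hprojmem : ∀ y, proj y ∈ K)
    (hprojmin : ∀ y, ∀ z ∈ K, ‖proj y - y‖ ≤ ‖z - y‖)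
    (η : ℕ → ℝ) (hη : ∀ t, η t = D / (G * Real.sqrt t))
    (x : ℕ → EuclideanSpace ℝ (Fin n)) (hx1 : x 1 ∈ K)
    (hstep : ∀ t, 1 ≤ t → x (t + 1) = proj (x t - η t • gradient (f t) (x t))) :
    ∀ xstar ∈ K,
      ∑ t ∈ Finset.Icc 1 T, f t (x t) - ∑ t ∈ Finset.Icc 1 T, f t xstar ≤
        (3 / 2) * G * D * Real.sqrt T := by
  intro xstar hxstar
  have hxK : ∀ t, 1 ≤ t → x t ∈ K := by
    intro t ht
    induction t, ht using Nat.le_induction with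
    | base => exact hx1
    | succ t ht ih => rw [hstep t ht]; exact hprojmem _
  -- projection is nonexpansive towards points of K
  have hproj2 : ∀ y : EuclideanSpace ℝ (Fin n), ‖proj y - xstar‖^2 ≤ ‖y - xstar‖^2 := by
    intro y
    have hinf : ‖y - proj y‖ = ⨅ w : K, ‖y - w‖ := by
      haveI : Nonempty K := ⟨⟨proj y, hprojmem y⟩⟩
      apply le_antisymm
      · exact le_ciInf fun w => by simpa [norm_sub_rev] using hprojmin y w w.2
      · have hbdd : BddBelow (Set.range fun w : K => ‖y - (w : EuclideanSpace ℝ (Fin n))‖) := by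
          refine ⟨0, ?_⟩
          rintro a ⟨w, rfl⟩
          exact norm_nonneg _
        exact ciInf_le hbdd ⟨proj y, hprojmem y⟩
    have hchar := (norm_eq_iInf_iff_real_inner_le_zero hKconv (hprojmem y)).1 hinf xstar hxstar
    have hid : y - xstar = (y - proj y) + (proj y - xstar) := by abel
    have hexp := norm_add_sq_real (y - proj y) (proj y - xstar)
    rw [← hid] at hexp
    have hin : (0:ℝ) ≤ inner ℝ (y - proj y) (proj y - xstar) := by
      have heq : (proj y - xstar) = -(xstar - proj y) := by abel
      rw [heq, inner_neg_right]
      linarith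
    nlinarith [sq_nonneg ‖y - proj y‖]
  -- per-step inequality
  have key : ∀ t, 1 ≤ t →
      f t (x t) - f t xstar ≤
        G * Real.sqrt t / (2 * D) * (‖x t - xstar‖^2 - ‖x (t+1) - xstar‖^2)
          + G * D / 2 * (1 / Real.sqrt t) := by
    intro t ht
    set s := Real.sqrt (t : ℝ) with hsdef
    have hs1 : (1:ℝ) ≤ s := by
      rw [hsdef, show (1:ℝ) = Real.sqrt 1 by simp]
      exact Real.sqrt_le_sqrt (by exact_mod_cast ht)
    have hs0 : (0:ℝ) < s := by linarith
    set g := gradient (f t) (x t) with hg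
    have hηt : η t = D / (G * s) := by rw [hη t, hsdef]
    have hηpos : 0 < η t := by rw [hηt]; positivity
    set y := x t - η t • g with hy
    have hxt1 : x (t+1) = proj y := hstep t ht
    have h3 : f t (x t) - f t xstar ≤ (inner ℝ g (x t - xstar) : ℝ) := by
      have hgi := ogd_grad_ineq (f t) (hconv t) (hdiff t) (x t) xstar
      have heq : x t - xstar = -(xstar - x t) := by abel
      rw [heq, inner_neg_right]
      linarith
    have hgG : ‖g‖ ≤ G := hgrad t (x t) (hxK t ht)
    have h2 : ‖y - xstar‖^2
        = ‖x t - xstar‖^2 - 2 * η t * (inner ℝ g (x t - xstar) : ℝ) + η t ^ 2 * ‖g‖^2 := by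
      have hid : y - xstar = (x t - xstar) - η t • g := by rw [hy]; abel
      rw [hid, norm_sub_sq_real, real_inner_smul_right, real_inner_comm (x t - xstar) g,
        norm_smul, Real.norm_eq_abs, abs_of_pos hηpos]
      ring
    have h1 : ‖x (t+1) - xstar‖^2 ≤ ‖y - xstar‖^2 := by rw [hxt1]; exact hproj2 y
    have h5 : 2 * η t * (inner ℝ g (x t - xstar) : ℝ)
        ≤ ‖x t - xstar‖^2 - ‖x (t+1) - xstar‖^2 + η t ^ 2 * G^2 := by
      nlinarith [h1, h2, sq_nonneg (η t), mul_le_mul hgG hgG (norm_nonneg g) hG.le]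
    rw [hηt] at h5
    set A := ‖x t - xstar‖^2 with hA
    set B := ‖x (t+1) - xstar‖^2 with hB
    set ip := (inner ℝ g (x t - xstar) : ℝ) with hip
    have hpos : (0:ℝ) ≤ G * s^2 := by positivity
    have h6 := mul_le_mul_of_nonneg_left h5 hpos
    have e1 : G * s^2 * (2 * (D / (G * s)) * ip) = 2 * D * s * ip := by
      field_simp
    have e2 : G * s^2 * (A - B + (D / (G * s)) ^ 2 * G^2) = G * s^2 * (A - B) + G * D^2 := by
      field_simp
    rw [e1, e2] at h6
    have hrw : G * s / (2 * D) * (A - B) + G * D / 2 * (1 / s)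
        = (G * s^2 * (A - B) + G * D^2) / (2 * D * s) := by
      field_simp
    rw [hrw, le_div_iff₀ (by positivity : (0:ℝ) < 2 * D * s)]
    have h7 := mul_le_mul_of_nonneg_right h3 (by positivity : (0:ℝ) ≤ 2 * D * s)
    nlinarith [h6, h7]
  -- main induction
  have claim : ∀ S : ℕ, ∑ t ∈ Finset.Icc 1 S, (f t (x t) - f t xstar)
      + G * Real.sqrt S / (2 * D) * ‖x (S+1) - xstar‖^2
      ≤ G * D / 2 * Real.sqrt S + G * D / 2 * ∑ t ∈ Finset.Icc 1 S, 1 / Real.sqrt t := by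
    intro S
    induction S with
    | zero => simp
    | succ S ih =>
      rw [Finset.sum_Icc_succ_top (Nat.one_le_iff_ne_zero.2 (Nat.succ_ne_zero S)),
        Finset.sum_Icc_succ_top (Nat.one_le_iff_ne_zero.2 (Nat.succ_ne_zero S))]
      have hk := key (S+1) (Nat.le_add_left 1 S)
      have hmono : Real.sqrt (S : ℝ) ≤ Real.sqrt ((S+1 : ℕ) : ℝ) :=
        Real.sqrt_le_sqrt (by push_cast; linarith)
      have h0 : (0:ℝ) ≤ Real.sqrt (S : ℝ) := Real.sqrt_nonneg _
      have haD : ‖x (S+1) - xstar‖ ≤ D :=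
        hdiam _ (hxK (S+1) (Nat.le_add_left 1 S)) _ hxstar
      have ha2 : ‖x (S+1) - xstar‖^2 ≤ D^2 := by
        nlinarith [norm_nonneg (x (S+1) - xstar)]
      have hdrop : G * (Real.sqrt ((S+1:ℕ) : ℝ) - Real.sqrt (S:ℝ)) / (2 * D)
            * ‖x (S+1) - xstar‖^2
          ≤ G * D / 2 * (Real.sqrt ((S+1:ℕ) : ℝ) - Real.sqrt (S:ℝ)) := by
        have hc : (0:ℝ) ≤ G * (Real.sqrt ((S+1:ℕ) : ℝ) - Real.sqrt (S:ℝ)) / (2 * D) := by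
          apply div_nonneg (mul_nonneg hG.le (by linarith)) (by linarith)
        have hmm := mul_le_mul_of_nonneg_left ha2 hc
        have he : G * (Real.sqrt ((S+1:ℕ) : ℝ) - Real.sqrt (S:ℝ)) / (2 * D) * D^2
            = G * D / 2 * (Real.sqrt ((S+1:ℕ) : ℝ) - Real.sqrt (S:ℝ)) := by
          field_simp
        linarith [hmm, he.le, he.ge]
      simp only [one_div] at hk ih hdrop ⊢
      ring_nf at hk ih hdrop ⊢
      linarith [hk, ih, hdrop]
  -- conclude
  rw [← Finset.sum_sub_distrib]
  have hclaim := claim T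
  have hsum := mul_le_mul_of_nonneg_left (ogd_sqrt_sum T)
    (by positivity : (0:ℝ) ≤ G * D / 2)
  have hterm : (0:ℝ) ≤ G * Real.sqrt T / (2 * D) * ‖x (T+1) - xstar‖^2 := by positivity
  nlinarith [hclaim, hsum, hterm, Real.sqrt_nonneg (T:ℝ)]
end

section
/- Under the assumptions of Lemma 1 of the OMAC paper (e-ISS nominal dynamics with constants $\gamma, \rho$, zero initial states, bounded disturbances $\|w_t^{(i)}\|\le W$), if the realized squared losses satisfy $\sum_{i=1}^N\sum_{t=1}^T \|B_t^{(i)} u_t^{(i)} - f_t^{(i)} + w_t^{(i)}\|^2 \le N T W^2 + N \cdot r_{in}(T) + T \cdot r_{out}(N)$ for functions $r_{in}, r_{out}$, then the average control error satisfies $\mathsf{ACE} \le \frac{\gamma}{1-\rho}\sqrt{W^2 + \frac{r_{in}(T)}{T} + \frac{r_{out}(N)}{N}}$. -/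
open Finset

lemma geom_bound (ρ : ℝ) (hρ0 : 0 ≤ ρ) (hρ1 : ρ < 1) (m : ℕ) :
    ∑ j ∈ range m, ρ ^ j ≤ 1 / (1 - ρ) := by
  have hne : ρ ≠ 1 := ne_of_lt hρ1
  rw [geom_sum_eq hne]
  have hρ' : (0:ℝ) < 1 - ρ := by linarith
  have heq : (ρ ^ m - 1) / (ρ - 1) = (1 - ρ ^ m) / (1 - ρ) := by
    rw [div_eq_div_iff (by linarith) (by linarith)]; ring
  have hpm : 0 ≤ ρ ^ m := pow_nonneg hρ0 m
  rw [heq, div_le_div_iff₀ hρ' hρ']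
  nlinarith

lemma swap_bound (ρ : ℝ) (hρ0 : 0 ≤ ρ) (hρ1 : ρ < 1) (T : ℕ) (a : ℕ → ℝ)
    (ha : ∀ k, 0 ≤ a k) :
    ∑ t ∈ Icc 1 T, ∑ k ∈ Icc 1 (t - 1), ρ ^ (t - 1 - k) * a k ≤
      (1 / (1 - ρ)) * ∑ k ∈ Icc 1 T, a k := by
  have hswap : ∑ t ∈ Icc 1 T, ∑ k ∈ Icc 1 (t - 1), ρ ^ (t - 1 - k) * a k =
      ∑ k ∈ Icc 1 T, ∑ t ∈ Icc (k + 1) T, ρ ^ (t - 1 - k) * a k := by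
    rw [Finset.sum_sigma', Finset.sum_sigma']
    refine sum_nbij' (fun x ↦ ⟨x.2, x.1⟩) (fun x ↦ ⟨x.2, x.1⟩) ?_ ?_ (fun _ _ ↦ rfl)
      (fun _ _ ↦ rfl) (fun _ _ ↦ rfl) <;>
    simp only [Finset.mem_Icc, Sigma.forall, Finset.mem_sigma] <;>
    rintro a b ⟨⟨h₁, h₂⟩, ⟨h₃, h₄⟩⟩ <;> omega
  rw [hswap, Finset.mul_sum]
  refine Finset.sum_le_sum fun k hk => ?_
  have h1 : ∑ t ∈ Icc (k + 1) T, ρ ^ (t - 1 - k) * a k =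
      (∑ t ∈ Icc (k + 1) T, ρ ^ (t - 1 - k)) * a k := by rw [Finset.sum_mul]
  rw [h1]
  refine mul_le_mul_of_nonneg_right ?_ (ha k)
  have h2 : ∑ t ∈ Icc (k + 1) T, ρ ^ (t - 1 - k) =
      ∑ j ∈ range (T + 1 - (k + 1)), ρ ^ j := by
    rw [← Finset.Ico_add_one_right_eq_Icc, Finset.sum_Ico_eq_sum_range]
    refine Finset.sum_congr rfl fun j _ => ?_
    congr 1
    omega
  rw [h2]
  exact geom_bound ρ hρ0 hρ1 _

theorem stmt_7 (n N T : ℕ) (hN : 1 ≤ N) (hT : 1 ≤ T)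
    (ρ γ W : ℝ) (hρ0 : 0 ≤ ρ) (hρ1 : ρ < 1) (hγ : 0 ≤ γ) (hW : 0 ≤ W)
    (x v : Fin N → ℕ → EuclideanSpace ℝ (Fin n))
    (rin rout : ℕ → ℝ)
    -- e-ISS with zero initial state: driving terms v i t = B_t u_t - f_t + w_t
    (hISS : ∀ i, ∀ t ∈ Finset.Icc 1 T,
      ‖x i t‖ ≤ γ * ∑ k ∈ Finset.Icc 1 (t - 1), ρ ^ (t - 1 - k) * ‖v i k‖)
    (hreg : ∑ i, ∑ t ∈ Finset.Icc 1 T, ‖v i t‖ ^ 2 ≤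
      (N : ℝ) * T * W ^ 2 + (N : ℝ) * rin T + (T : ℝ) * rout N) :
    (1 / ((T : ℝ) * N)) * ∑ i, ∑ t ∈ Finset.Icc 1 T, ‖x i t‖ ≤
      (γ / (1 - ρ)) * Real.sqrt (W ^ 2 + rin T / T + rout N / N) := by
  have hρ' : (0:ℝ) < 1 - ρ := by linarith
  have hTpos : (0:ℝ) < T := by exact_mod_cast hT
  have hNpos : (0:ℝ) < N := by exact_mod_cast hN
  set S : ℝ := ∑ i, ∑ t ∈ Finset.Icc 1 T, ‖v i t‖ with hS
  set Q : ℝ := ∑ i, ∑ t ∈ Finset.Icc 1 T, ‖v i t‖ ^ 2 with hQ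
  set E : ℝ := W ^ 2 + rin T / T + rout N / N with hE
  -- Step 1: sum of ‖x‖ ≤ (γ/(1-ρ)) * S
  have step1 : ∑ i, ∑ t ∈ Finset.Icc 1 T, ‖x i t‖ ≤ (γ / (1 - ρ)) * S := by
    rw [hS, Finset.mul_sum]
    refine Finset.sum_le_sum fun i _ => ?_
    calc ∑ t ∈ Finset.Icc 1 T, ‖x i t‖
        ≤ ∑ t ∈ Finset.Icc 1 T, γ * ∑ k ∈ Finset.Icc 1 (t - 1), ρ ^ (t - 1 - k) * ‖v i k‖ :=
          Finset.sum_le_sum fun t ht => hISS i t ht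
      _ = γ * ∑ t ∈ Finset.Icc 1 T, ∑ k ∈ Finset.Icc 1 (t - 1), ρ ^ (t - 1 - k) * ‖v i k‖ := by
          rw [Finset.mul_sum]
      _ ≤ γ * ((1 / (1 - ρ)) * ∑ k ∈ Finset.Icc 1 T, ‖v i k‖) := by
          refine mul_le_mul_of_nonneg_left ?_ hγ
          exact swap_bound ρ hρ0 hρ1 T _ (fun k => norm_nonneg _)
      _ = (γ / (1 - ρ)) * ∑ k ∈ Finset.Icc 1 T, ‖v i k‖ := by ring
  -- Step 2: Cauchy-Schwarz: S^2 ≤ N*T*Q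
  have hSnn : 0 ≤ S := Finset.sum_nonneg fun i _ =>
    Finset.sum_nonneg fun t _ => norm_nonneg _
  have hQnn : 0 ≤ Q := Finset.sum_nonneg fun i _ =>
    Finset.sum_nonneg fun t _ => sq_nonneg _
  have step2 : S ^ 2 ≤ ((N : ℝ) * T) * Q := by
    have := sq_sum_le_card_mul_sum_sq (s := (Finset.univ ×ˢ Finset.Icc 1 T : Finset (Fin N × ℕ)))
      (f := fun p => ‖v p.1 p.2‖)
    rw [Finset.sum_product] at this
    simp only [Finset.card_product, Finset.card_univ, Fintype.card_fin, Nat.card_Icc] at this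
    calc S ^ 2 ≤ (↑(N * (T + 1 - 1)) : ℝ) *
          ∑ p ∈ Finset.univ ×ˢ Finset.Icc 1 T, ‖v p.1 p.2‖ ^ 2 := by
          convert this using 2
      _ = ((N : ℝ) * T) * Q := by
          rw [Finset.sum_product]
          push_cast
          norm_num
          exact Or.inl rfl
  -- Step 3: Q ≤ N*T*E
  have step3 : Q ≤ (N : ℝ) * T * E := by
    have : (N : ℝ) * T * E = (N : ℝ) * T * W ^ 2 + (N : ℝ) * rin T + (T : ℝ) * rout N := by
      rw [hE]; field_simp
    rw [this]; exact hreg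
  have hEnn : 0 ≤ E := by
    by_contra h
    push_neg at h
    have := mul_neg_of_pos_of_neg (mul_pos hNpos hTpos) h
    linarith
  -- Step 4: S ≤ N*T*√E
  have step4 : S ≤ (N : ℝ) * T * Real.sqrt E := by
    have h1 : S ^ 2 ≤ ((N : ℝ) * T) ^ 2 * E := by
      have h0 : (N : ℝ) * T * Q ≤ (N : ℝ) * T * ((N : ℝ) * T * E) :=
        mul_le_mul_of_nonneg_left step3 (by positivity)
      nlinarith
    have h2 : S ≤ Real.sqrt (((N : ℝ) * T) ^ 2 * E) := by
      rw [← Real.sqrt_sq hSnn]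
      exact Real.sqrt_le_sqrt h1
    calc S ≤ Real.sqrt (((N : ℝ) * T) ^ 2 * E) := h2
      _ = (N : ℝ) * T * Real.sqrt E := by
          rw [Real.sqrt_mul (sq_nonneg _), Real.sqrt_sq (by positivity)]
  -- Conclude
  have hγρ : 0 ≤ γ / (1 - ρ) := div_nonneg hγ (le_of_lt hρ')
  have final : ∑ i, ∑ t ∈ Finset.Icc 1 T, ‖x i t‖ ≤
      (γ / (1 - ρ)) * ((N : ℝ) * T * Real.sqrt E) :=
    step1.trans (mul_le_mul_of_nonneg_left step4 hγρ)
  have hTN : (0:ℝ) < (T:ℝ) * N := by positivity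
  rw [one_div, inv_mul_le_iff₀ hTN]
  calc ∑ i, ∑ t ∈ Finset.Icc 1 T, ‖x i t‖
      ≤ (γ / (1 - ρ)) * ((N : ℝ) * T * Real.sqrt E) := final
    _ = (T : ℝ) * N * (γ / (1 - ρ) * Real.sqrt E) := by ring
end
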